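/- Let 1 < p < 2 < q < ∞ and let g_i be the i-th coordinate functional on ℓ^p. Then {g_i} is an (ℓ^q, ℓ², ℓ^p)-frame with bounds A = B = 1 (i.e., for every c ∈ ℓ^p, ‖c‖_{ℓ^q} ≤ ‖c‖_{ℓ²} ≤ ‖c‖_{ℓ^p}), but the range of the analysis operator Ũ : ℓ^p → ℓ², Ũc = c, is not closed in ℓ². -/

import Mathlib

open scoped ENNReal

lemma aux_norm_le {r s : ℝ≥0∞} (hr : 0 < r.toReal) (hs : 0 < s.toReal)
    (hrs : r.toReal ≤ s.toReal) (f : ℕ → ℝ) (hfr : Memℓp f r) (hfs : Memℓp f s) :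
    ‖(⟨f, hfs⟩ : lp (fun _ : ℕ => ℝ) s)‖ ≤ ‖(⟨f, hfr⟩ : lp (fun _ : ℕ => ℝ) r)‖ := by
  set F : lp (fun _ : ℕ => ℝ) r := ⟨f, hfr⟩ with hF
  set G : lp (fun _ : ℕ => ℝ) s := ⟨f, hfs⟩ with hG
  have hr0 : r ≠ 0 := by
    intro h; rw [h] at hr; simp at hr
  have hFG : ∀ i, ‖G i‖ = ‖F i‖ := fun i => rfl
  have hbound : ∀ i, ‖F i‖ ≤ ‖F‖ := fun i => lp.norm_apply_le_norm hr0 F i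
  have key : ‖G‖ ^ s.toReal ≤ ‖F‖ ^ s.toReal := by
    rw [lp.norm_rpow_eq_tsum hs]
    have hpt : ∀ i, ‖G i‖ ^ s.toReal ≤ ‖F i‖ ^ r.toReal * ‖F‖ ^ (s.toReal - r.toReal) := by
      intro i
      rw [hFG]
      have h1 : ‖F i‖ ^ s.toReal = ‖F i‖ ^ r.toReal * ‖F i‖ ^ (s.toReal - r.toReal) := by
        rw [← Real.rpow_add' (norm_nonneg _) (by linarith)]
        ring_nf
      rw [h1]
      exact mul_le_mul_of_nonneg_left
        (Real.rpow_le_rpow (norm_nonneg _) (hbound i) (by linarith))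
        (Real.rpow_nonneg (norm_nonneg _) _)
    have hs1 : Summable fun i => ‖G i‖ ^ s.toReal := (lp.hasSum_norm hs G).summable
    have hs2 : Summable fun i => ‖F i‖ ^ r.toReal * ‖F‖ ^ (s.toReal - r.toReal) :=
      ((lp.hasSum_norm hr F).summable).mul_right _
    calc ∑' i, ‖G i‖ ^ s.toReal
        ≤ ∑' i, ‖F i‖ ^ r.toReal * ‖F‖ ^ (s.toReal - r.toReal) := Summable.tsum_le_tsum hpt hs1 hs2
      _ = (∑' i, ‖F i‖ ^ r.toReal) * ‖F‖ ^ (s.toReal - r.toReal) := tsum_mul_right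
      _ = ‖F‖ ^ r.toReal * ‖F‖ ^ (s.toReal - r.toReal) := by rw [← lp.norm_rpow_eq_tsum hr]
      _ = ‖F‖ ^ s.toReal := by
          rw [← Real.rpow_add' (lp.norm_nonneg' F) (by linarith : r.toReal + (s.toReal - r.toReal) ≠ 0)]
          ring_nf
  have h2 : (0:ℝ) ≤ ‖G‖ := lp.norm_nonneg' G
  have h3 : (0:ℝ) ≤ ‖F‖ := lp.norm_nonneg' F
  nlinarith [Real.rpow_natCast ‖G‖ 1, Real.rpow_le_rpow_iff h2 h3 hs, (Real.rpow_le_rpow_iff h2 h3 hs).mp key]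

/-- For `1 < p < 2 < q < ∞`, the coordinate functionals on `ℓ^p` form an
`(ℓ^q, ℓ^2, ℓ^p)`-frame with bounds `A = B = 1` (i.e. the norm inequalities
`‖c‖_q ≤ ‖c‖_2 ≤ ‖c‖_p` hold for every `c ∈ ℓ^p`), but the range of the analysis
operator (the set of elements of `ℓ^2` lying in `ℓ^p`) is not closed in `ℓ^2`. -/
theorem statement4 (p q : ℝ≥0∞) (hp1 : 1 < p) (hp2 : p < 2) (hq2 : 2 < q) (hq : q < ⊤) :
    (∀ f : lp (fun _ : ℕ => ℝ) p,
      ∃ (h2 : Memℓp (⇑f) 2) (hq' : Memℓp (⇑f) q),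
        ‖(⟨⇑f, hq'⟩ : lp (fun _ : ℕ => ℝ) q)‖ ≤ ‖(⟨⇑f, h2⟩ : lp (fun _ : ℕ => ℝ) 2)‖ ∧
        ‖(⟨⇑f, h2⟩ : lp (fun _ : ℕ => ℝ) 2)‖ ≤ ‖f‖) ∧
    ¬ IsClosed {x : lp (fun _ : ℕ => ℝ) 2 | Memℓp (⇑x) p} := by
  have hpt : p ≠ ⊤ := (hp2.trans (by norm_num)).ne
  have hp0 : p ≠ 0 := (zero_lt_one.trans hp1).ne'
  have ht1 : 1 < p.toReal := by
    have := ENNReal.toReal_lt_toReal (by norm_num : (1:ℝ≥0∞) ≠ ⊤) hpt |>.mpr hp1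
    simpa using this
  have ht2 : p.toReal < 2 := by
    have := ENNReal.toReal_lt_toReal hpt (by norm_num : (2:ℝ≥0∞) ≠ ⊤) |>.mpr hp2
    simpa using this
  have htwo : (2:ℝ≥0∞).toReal = 2 := by norm_num
  have hqr : 2 < q.toReal := by
    have := ENNReal.toReal_lt_toReal (by norm_num : (2:ℝ≥0∞) ≠ ⊤) hq.ne |>.mpr hq2
    simpa using this
  constructor
  · intro f
    have hf : Memℓp (⇑f) p := lp.memℓp f
    have h2 : Memℓp (⇑f) 2 := hf.of_exponent_ge hp2.le
    have hq' : Memℓp (⇑f) q := h2.of_exponent_ge hq2.le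
    refine ⟨h2, hq', ?_, ?_⟩
    · exact aux_norm_le (by norm_num) (by linarith) (by rw [htwo]; linarith) (⇑f) h2 hq'
    · have heq : (⟨⇑f, hf⟩ : lp (fun _ : ℕ => ℝ) p) = f := rfl
      have := aux_norm_le (by linarith : 0 < p.toReal) (by norm_num) (by rw [htwo]; linarith)
        (⇑f) hf h2
      rwa [heq] at this
  · set t := p.toReal
    set f0 : ℕ → ℝ := fun n => ((n : ℝ) + 1) ^ (-(1 / t)) with hf0
    have hpos : ∀ n : ℕ, (0:ℝ) < (n : ℝ) + 1 := fun n => by positivity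
    have hnorm : ∀ n, ‖f0 n‖ = ((n : ℝ) + 1) ^ (-(1 / t)) := fun n =>
      Real.norm_of_nonneg (Real.rpow_nonneg (hpos n).le _)
    have key : ∀ c : ℝ, Summable (fun n : ℕ => ((n : ℝ) + 1) ^ c) ↔ c < -1 := by
      intro c
      have h1 : (fun n : ℕ => ((n : ℝ) + 1) ^ c) = fun n : ℕ => ((n + 1 : ℕ) : ℝ) ^ c := by
        funext n; push_cast; ring_nf
      rw [h1, summable_nat_add_iff (f := fun n : ℕ => (n : ℝ) ^ c) 1, Real.summable_nat_rpow]
    have hf02 : Memℓp f0 2 := by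
      apply memℓp_gen
      have : (fun n : ℕ => ‖f0 n‖ ^ (2:ℝ≥0∞).toReal)
          = fun n : ℕ => ((n : ℝ) + 1) ^ (-(1 / t) * 2) := by
        funext n
        rw [hnorm, ← Real.rpow_mul (hpos n).le]
        norm_num
      rw [this, key, neg_mul, neg_lt_neg_iff, one_div, inv_mul_eq_div,
        lt_div_iff₀ (by linarith : (0:ℝ) < t)]
      linarith
    have hf0p : ¬ Memℓp f0 p := by
      intro h
      have hsum := h.summable (by linarith : 0 < p.toReal)
      have : (fun n : ℕ => ‖f0 n‖ ^ p.toReal) = fun n : ℕ => ((n : ℝ) + 1) ^ (-1 : ℝ) := by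
        funext n
        rw [hnorm, ← Real.rpow_mul (hpos n).le]
        congr 1
        field_simp
        rfl
      rw [this, key] at hsum
      linarith
    intro hcl
    set x0 : lp (fun _ : ℕ => ℝ) 2 := ⟨f0, hf02⟩ with hx0
    have hmem : x0 ∈ {x : lp (fun _ : ℕ => ℝ) 2 | Memℓp (⇑x) p} := by
      apply hcl.closure_subset
      have hsum := (lp.hasSum_single (by norm_num : (2:ℝ≥0∞) ≠ ⊤) x0).tendsto_sum_nat
      refine mem_closure_of_tendsto hsum (Filter.Eventually.of_forall fun n => ?_)
      show Memℓp (⇑(∑ i ∈ Finset.range n, lp.single 2 i (x0 i))) p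
      refine Memℓp.of_exponent_ge (memℓp_zero ?_) (zero_le : 0 ≤ p)
      apply (Finset.range n).finite_toSet.subset
      intro j hj
      simp only [Set.mem_setOf_eq, lp.coeFn_sum, Finset.sum_apply] at hj
      by_contra hjn
      apply hj
      apply Finset.sum_eq_zero
      intro i hi
      apply lp.single_apply_ne
      rintro rfl
      exact hjn hi
    exact hf0p hmem
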